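/- Vulnerability of non-infinity measurement errors. Let S = [−1/2, 1/2] with Lebesgue measure, A = {a₁, a₂}, and define the optimal action a*(s) := a₁ for s ∈ [0, 1/2] and a*(s) := a₂ for s ∈ [−1/2, 0). Let φ : S → A → ℝ be measurable with φ(s,·) a probability vector for each s and φ(s, a*(s)) > φ(s, a) for the other action a, for every s. Then for every ε > 0, every k ∈ [1, ∞), and every δ > 0, there exists a measurable π : S → A → ℝ with π(s,·) a strictly positive probability vector for each s, such that: (a) ( ∫_{−1/2}^{1/2} KL(φ(s,·) ‖ π(s,·))^k ds )^{1/k} ≤ δ; (b) the Lebesgue measure of {s : a*(s) is not the unique maximizer of π(s,·)} is at most δ; yet (c) for every s ∈ [−1/2, 1/2] there exists s_ν ∈ [−1/2, 1/2] with |s_ν − s| ≤ ε such that some maximizer a of π(s_ν,·) satisfies a ≠ a*(s). In particular the adversarial state set of π is all of S although the k-measurement error and the naturally suboptimal set are arbitrarily small. -/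

import Mathlib

open MeasureTheory
open scoped ENNReal

/-- Gibbs' inequality for probability vectors on `Bool`. -/
lemma gibbs_bool (p q : Bool → ℝ) (hp : ∀ a, 0 ≤ p a) (hps : ∑ a, p a = 1)
    (hq : ∀ a, 0 < q a) (hqs : ∑ a, q a = 1) :
    0 ≤ ∑ a, p a * Real.log (p a / q a) := by
  have key : ∀ a, p a - q a ≤ p a * Real.log (p a / q a) := by
    intro a
    rcases eq_or_lt_of_le (hp a) with h | h
    · simp only [← h, zero_mul, zero_sub, neg_nonpos]
      exact (hq a).le
    · have hx : 0 < q a / p a := div_pos (hq a) h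
      have hlog := Real.log_le_sub_one_of_pos hx
      have h1 : Real.log (p a / q a) = - Real.log (q a / p a) := by
        rw [← Real.log_inv, inv_div]
      rw [h1]
      have h2 : p a * Real.log (q a / p a) ≤ p a * (q a / p a - 1) :=
        mul_le_mul_of_nonneg_left hlog h.le
      have h3 : p a * (q a / p a - 1) = q a - p a := by field_simp
      nlinarith
  calc (0:ℝ) = ∑ a, (p a - q a) := by rw [Finset.sum_sub_distrib, hps, hqs]; ring
  _ ≤ _ := Finset.sum_le_sum (fun a _ => key a)

/-- The optimal action on `[-1/2, 1/2]`: `a₁ = true` for `s ≥ 0`, `a₂ = false` for `s < 0`. -/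
noncomputable def astar (s : ℝ) : Bool := if 0 ≤ s then true else false

/-- Vulnerability of non-infinity measurement errors: for every `ε > 0`, `k ∈ [1,∞)` and
`δ > 0` there is a strictly positive policy `π` whose `k`-measurement KL error to a
greedy-optimal policy `φ` is at most `δ` and whose naturally suboptimal set has measure at
most `δ`, yet every state of `[-1/2,1/2]` has an `ε`-close adversarial state flipping the
greedy action away from the optimal one. -/
theorem stmt18 (φ : ℝ → Bool → ℝ)
    (hφm : ∀ a, Measurable (fun s => φ s a))
    (hφprob : ∀ s ∈ Set.Icc (-(1:ℝ)/2) (1/2), (∀ a, 0 ≤ φ s a) ∧ ∑ a, φ s a = 1)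
    (hφopt : ∀ s ∈ Set.Icc (-(1:ℝ)/2) (1/2), φ s (!astar s) < φ s (astar s)) :
    ∀ ε > (0:ℝ), ∀ k : ℝ, 1 ≤ k → ∀ δ > (0:ℝ),
      ∃ pol : ℝ → Bool → ℝ,
        (∀ a, Measurable (fun s => pol s a)) ∧
        (∀ s ∈ Set.Icc (-(1:ℝ)/2) (1/2), (∀ a, 0 < pol s a) ∧ ∑ a, pol s a = 1) ∧
        (∫ s in Set.Icc (-(1:ℝ)/2) (1/2),
            (∑ a, φ s a * Real.log (φ s a / pol s a)) ^ k) ^ (1/k) ≤ δ ∧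
        volume {s ∈ Set.Icc (-(1:ℝ)/2) (1/2) |
            ¬ ∀ a, a ≠ astar s → pol s a < pol s (astar s)} ≤ ENNReal.ofReal δ ∧
        ∀ s ∈ Set.Icc (-(1:ℝ)/2) (1/2),
          ∃ sν ∈ Set.Icc (-(1:ℝ)/2) (1/2), |sν - s| ≤ ε ∧
            ∃ a, (∀ a', pol sν a' ≤ pol sν a) ∧ a ≠ astar s := by
  classical
  intro ε hε k hk δ hδ
  set I : Set ℝ := Set.Icc (-(1:ℝ)/2) (1/2) with hI
  have hk0 : (0:ℝ) < k := lt_of_lt_of_le one_pos hk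
  -- the mixture parameter
  set t : ℝ := 1 - Real.exp (-δ) with htdef
  have hexp_pos : 0 < Real.exp (-δ) := Real.exp_pos _
  have hexp_lt : Real.exp (-δ) < 1 := by
    have := Real.exp_lt_exp.2 (show -δ < 0 by linarith)
    simpa using this
  have ht0 : 0 < t := by simp only [htdef]; linarith
  have ht1 : t < 1 := by simp only [htdef]; linarith
  have h1t : 1 - t = Real.exp (-δ) := by simp [htdef]
  have h1t_pos : 0 < 1 - t := by rw [h1t]; exact hexp_pos
  -- the countable grid
  set D : Set ℝ := {s : ℝ | ∃ j : ℤ, s = (j : ℝ) * ε} with hD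
  have hDc : D.Countable := by
    have hsub : D ⊆ Set.range (fun j : ℤ => (j : ℝ) * ε) := by
      rintro s ⟨j, hj⟩; exact ⟨j, hj.symm⟩
    exact (Set.countable_range _).mono hsub
  have hDm : MeasurableSet D := hDc.measurableSet
  have hDnull : volume D = 0 := hDc.measure_zero _
  -- the policy
  set pol : ℝ → Bool → ℝ :=
    fun s a => if s ∈ D then (1/2 : ℝ) else (1 - t) * φ s a + t/2 with hpol
  have hpolD : ∀ x ∈ D, ∀ a, pol x a = 1/2 := fun x hx a => if_pos hx
  have hpolN : ∀ x, x ∉ D → ∀ a, pol x a = (1 - t) * φ x a + t/2 :=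
    fun x hx a => if_neg hx
  have hpolm : ∀ a, Measurable (fun s => pol s a) := by
    intro a
    exact Measurable.ite hDm measurable_const
      ((measurable_const.mul (hφm a)).add measurable_const)
  -- probability vector properties
  have hprob : ∀ s ∈ I, (∀ a, 0 < pol s a) ∧ ∑ a, pol s a = 1 := by
    intro s hs
    by_cases hsD : s ∈ D
    · constructor
      · intro a; rw [hpolD s hsD a]; norm_num
      · rw [Fintype.sum_bool, hpolD s hsD true, hpolD s hsD false]; norm_num
    · have hφ0 := (hφprob s hs).1
      have hφ1 := (hφprob s hs).2
      rw [Fintype.sum_bool] at hφ1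
      constructor
      · intro a
        have h0a := hφ0 a
        rw [hpolN s hsD a]
        nlinarith
      · rw [Fintype.sum_bool, hpolN s hsD true, hpolN s hsD false]
        nlinarith
  refine ⟨pol, hpolm, hprob, ?_, ?_, ?_⟩
  · -- KL error bound
    set f : ℝ → ℝ := fun s => (∑ a, φ s a * Real.log (φ s a / pol s a)) ^ k with hf
    have hKL0 : ∀ s ∈ I, 0 ≤ ∑ a, φ s a * Real.log (φ s a / pol s a) := by
      intro s hs
      exact gibbs_bool _ _ (hφprob s hs).1 (hφprob s hs).2 (hprob s hs).1 (hprob s hs).2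
    have hKLle : ∀ s ∈ I, s ∉ D → (∑ a, φ s a * Real.log (φ s a / pol s a)) ≤ δ := by
      intro s hs hsD
      have hφ0 := (hφprob s hs).1
      have hφ1 := (hφprob s hs).2
      have hterm : ∀ a, φ s a * Real.log (φ s a / pol s a) ≤ φ s a * δ := by
        intro a
        rcases eq_or_lt_of_le (hφ0 a) with h | h
        · simp [← h]
        · have hpe : pol s a = (1 - t) * φ s a + t/2 := hpolN s hsD a
          have hden_pos : 0 < (1 - t) * φ s a := mul_pos h1t_pos h
          have hpol_pos : 0 < pol s a := by rw [hpe]; nlinarith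
          have hratio : φ s a / pol s a ≤ φ s a / ((1 - t) * φ s a) := by
            apply div_le_div_of_nonneg_left (hφ0 a) hden_pos
            rw [hpe]; nlinarith
          have heq : φ s a / ((1 - t) * φ s a) = Real.exp δ := by
            rw [mul_comm, ← div_div, div_self (ne_of_gt h), h1t, one_div,
              ← Real.exp_neg, neg_neg]
          have hratio' : φ s a / pol s a ≤ Real.exp δ := heq ▸ hratio
          have hlog : Real.log (φ s a / pol s a) ≤ δ := by
            calc Real.log (φ s a / pol s a) ≤ Real.log (Real.exp δ) :=
                  Real.log_le_log (div_pos h hpol_pos) hratio'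
            _ = δ := Real.log_exp δ
          exact mul_le_mul_of_nonneg_left hlog (hφ0 a)
      calc ∑ a, φ s a * Real.log (φ s a / pol s a) ≤ ∑ a, φ s a * δ :=
            Finset.sum_le_sum (fun a _ => hterm a)
      _ = (∑ a, φ s a) * δ := by rw [Finset.sum_mul]
      _ = δ := by rw [hφ1, one_mul]
    -- measurability of the integrand
    have hKLm : Measurable (fun s => ∑ a, φ s a * Real.log (φ s a / pol s a)) := by
      apply Finset.measurable_sum
      intro a _
      exact (hφm a).mul (Real.measurable_log.comp ((hφm a).div (hpolm a)))
    have hfm : Measurable f :=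
      (Real.continuous_rpow_const hk0.le).measurable.comp hKLm
    -- a.e. facts on the restricted measure
    have hIm : MeasurableSet I := measurableSet_Icc
    have haeI : ∀ᵐ s ∂(volume.restrict I), s ∈ I := ae_restrict_mem hIm
    have hDnullR : (volume.restrict I) D = 0 := by
      rw [Measure.restrict_apply hDm]
      exact measure_mono_null Set.inter_subset_left hDnull
    have haeD : ∀ᵐ s ∂(volume.restrict I), s ∉ D := by
      rw [ae_iff]
      simpa [not_not] using hDnullR
    have haeBound : ∀ᵐ s ∂(volume.restrict I), 0 ≤ f s ∧ f s ≤ δ ^ k := by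
      filter_upwards [haeI, haeD] with s hs hsD
      constructor
      · exact Real.rpow_nonneg (hKL0 s hs) k
      · exact Real.rpow_le_rpow (hKL0 s hs) (hKLle s hs hsD) hk0.le
    haveI : IsFiniteMeasure (volume.restrict I) := by
      constructor
      rw [Measure.restrict_apply_univ, hI, Real.volume_Icc]
      exact ENNReal.ofReal_lt_top
    have hint : Integrable f (volume.restrict I) := by
      refine ⟨hfm.aestronglyMeasurable, ?_⟩
      apply HasFiniteIntegral.of_bounded (C := δ ^ k)
      filter_upwards [haeBound] with s hs
      rw [Real.norm_eq_abs, abs_of_nonneg hs.1]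
      exact hs.2
    have hIle : ∫ s in I, f s ≤ ∫ s in I, δ ^ k := by
      apply integral_mono_ae hint (integrable_const _)
      filter_upwards [haeBound] with s hs
      exact hs.2
    have hIconst : ∫ s in I, (δ ^ k : ℝ) = δ ^ k := by
      rw [setIntegral_const, hI, Real.volume_real_Icc]
      norm_num
    have hI0 : 0 ≤ ∫ s in I, f s := by
      apply integral_nonneg_of_ae
      filter_upwards [haeBound] with s hs
      exact hs.1
    have hfinal : (∫ s in I, f s) ^ (1/k) ≤ (δ ^ k) ^ (1/k) :=
      Real.rpow_le_rpow hI0 (hIle.trans hIconst.le) (by positivity)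
    have hsimp : ((δ : ℝ) ^ k) ^ (1/k) = δ := by
      rw [← Real.rpow_mul hδ.le, mul_one_div, div_self (ne_of_gt hk0), Real.rpow_one]
    calc (∫ s in I, f s) ^ (1/k) ≤ (δ ^ k) ^ (1/k) := hfinal
    _ = δ := hsimp
  · -- bad set has measure zero
    have hsub : {s ∈ I | ¬ ∀ a, a ≠ astar s → pol s a < pol s (astar s)} ⊆ D := by
      intro s hs
      by_contra hsD
      apply hs.2
      intro a ha
      have haeq : a = !astar s := Bool.eq_not_iff.mpr ha
      have hopt := hφopt s hs.1
      rw [hpolN s hsD a, hpolN s hsD (astar s), haeq]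
      linarith [mul_lt_mul_of_pos_left hopt h1t_pos]
    calc volume {s ∈ I | ¬ ∀ a, a ≠ astar s → pol s a < pol s (astar s)}
        ≤ volume D := measure_mono hsub
    _ = 0 := hDnull
    _ ≤ ENNReal.ofReal δ := zero_le'
  · -- adversarial states are dense
    intro s hs
    obtain ⟨hs1, hs2⟩ := hs
    have key : ∃ x : ℝ, x ∈ D ∧ x ∈ I ∧ |x - s| ≤ ε := by
      by_cases hs0 : 0 ≤ s
      · refine ⟨(⌊s/ε⌋ : ℝ) * ε, ⟨⌊s/ε⌋, rfl⟩, ?_, ?_⟩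
        · have hj0 : (0:ℝ) ≤ (⌊s/ε⌋ : ℝ) := by
            exact_mod_cast Int.floor_nonneg.2 (div_nonneg hs0 hε.le)
          have hge : (0:ℝ) ≤ (⌊s/ε⌋ : ℝ) * ε := mul_nonneg hj0 hε.le
          have hjle : (⌊s/ε⌋ : ℝ) * ε ≤ s := by
            rw [← le_div_iff₀ hε]; exact Int.floor_le _
          constructor
          · linarith
          · linarith
        · have hjle : (⌊s/ε⌋ : ℝ) * ε ≤ s := by
            rw [← le_div_iff₀ hε]; exact Int.floor_le _
          have hlt : s < ((⌊s/ε⌋ : ℝ) + 1) * ε := by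
            rw [← div_lt_iff₀ hε]; exact Int.lt_floor_add_one _
          have hexp : ((⌊s/ε⌋ : ℝ) + 1) * ε = (⌊s/ε⌋ : ℝ) * ε + ε := by ring
          rw [abs_le]
          constructor
          · linarith [hexp ▸ hlt]
          · linarith
      · push_neg at hs0
        refine ⟨(⌈s/ε⌉ : ℝ) * ε, ⟨⌈s/ε⌉, rfl⟩, ?_, ?_⟩
        · have hj0 : (⌈s/ε⌉ : ℝ) ≤ 0 := by
            have : ⌈s/ε⌉ ≤ (0:ℤ) := Int.ceil_le.2 (by
              push_cast
              exact (div_nonpos_iff.2 (Or.inr ⟨hs0.le, hε.le⟩)))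
            exact_mod_cast this
          have hle0 : (⌈s/ε⌉ : ℝ) * ε ≤ 0 := mul_nonpos_of_nonpos_of_nonneg hj0 hε.le
          have hjge : s ≤ (⌈s/ε⌉ : ℝ) * ε := by
            rw [← div_le_iff₀ hε]; exact Int.le_ceil _
          constructor
          · linarith
          · linarith
        · have hjge : s ≤ (⌈s/ε⌉ : ℝ) * ε := by
            rw [← div_le_iff₀ hε]; exact Int.le_ceil _
          have hlt : ((⌈s/ε⌉ : ℝ) - 1) * ε < s := by
            rw [← lt_div_iff₀ hε]
            have := Int.ceil_lt_add_one (s/ε)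
            linarith
          have hexp : ((⌈s/ε⌉ : ℝ) - 1) * ε = (⌈s/ε⌉ : ℝ) * ε - ε := by ring
          rw [abs_le]
          constructor
          · linarith
          · linarith [hexp ▸ hlt]
    obtain ⟨x, hxD, hxI, hxe⟩ := key
    refine ⟨x, hxI, hxe, !astar s, ?_, Bool.not_ne_self _⟩
    intro a'
    rw [hpolD x hxD a', hpolD x hxD (!astar s)]
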